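/- arXiv:2507.16319 — 5 statements merged into one kernel-verified Lean document; each statement's English description precedes it below -/
import Mathlib

section
/- Let γ > 1 and λ > 0. There exists a constant C = C(γ) > 0 (independent of λ and s) such that for all s > 0: if s ≤ λ^{-2/(γ-1)} then C⁻¹ s^{(1+γ)/2} ≤ ∫₀ˢ dz/√((2/(γ-1)) z^{1-γ} + λ²) ≤ C s^{(1+γ)/2}, and if s ≥ λ^{-2/(γ-1)} then C⁻¹ s/λ ≤ ∫₀ˢ dz/√((2/(γ-1)) z^{1-γ} + λ²) ≤ C s/λ. -/
open Real intervalIntegral MeasureTheory Set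

set_option maxHeartbeats 1000000 in
theorem integral_two_regime_estimate (γ : ℝ) (hγ : 1 < γ) :
    ∃ C > 0, ∀ lam > (0:ℝ), ∀ s > (0:ℝ),
      (s ≤ lam ^ (-2 / (γ - 1)) →
        C⁻¹ * s ^ ((1 + γ) / 2) ≤
          (∫ z in (0:ℝ)..s, 1 / Real.sqrt ((2 / (γ - 1)) * z ^ (1 - γ) + lam ^ 2)) ∧
        (∫ z in (0:ℝ)..s, 1 / Real.sqrt ((2 / (γ - 1)) * z ^ (1 - γ) + lam ^ 2)) ≤
          C * s ^ ((1 + γ) / 2)) ∧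
      (lam ^ (-2 / (γ - 1)) ≤ s →
        C⁻¹ * (s / lam) ≤
          (∫ z in (0:ℝ)..s, 1 / Real.sqrt ((2 / (γ - 1)) * z ^ (1 - γ) + lam ^ 2)) ∧
        (∫ z in (0:ℝ)..s, 1 / Real.sqrt ((2 / (γ - 1)) * z ^ (1 - γ) + lam ^ 2)) ≤
          C * (s / lam)) := by
  have hγ1 : (0:ℝ) < γ - 1 := by linarith
  have hsqrt_rpow : ∀ x : ℝ, 0 < x → ∀ p : ℝ, Real.sqrt (x ^ p) = x ^ (p / 2) := by
    intro x hx p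
    rw [Real.sqrt_eq_rpow, ← Real.rpow_mul hx.le, show p * (1/2) = p/2 by ring]
  set a : ℝ := 2 / (γ - 1) with ha_def
  have ha : 0 < a := by positivity
  set K : ℝ := (a + 1) * 2 ^ (γ - 1) with hK_def
  have h2pow : (0:ℝ) < 2 ^ (γ - 1) := rpow_pos_of_pos two_pos _
  have h2pow1 : (1:ℝ) ≤ 2 ^ (γ - 1) := by
    calc (1:ℝ) = 2 ^ (0:ℝ) := by rw [rpow_zero]
    _ ≤ 2 ^ (γ - 1) := rpow_le_rpow_of_exponent_le one_le_two hγ1.le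
  have hK : 0 < K := by positivity
  have hsK : 0 < Real.sqrt K := sqrt_pos.mpr hK
  have hsa : 0 < Real.sqrt a := sqrt_pos.mpr ha
  set C : ℝ := 2 * Real.sqrt K + 2 / ((γ + 1) * Real.sqrt a) + 1 with hC_def
  have hC : 0 < C := by positivity
  have hC2K : 2 * Real.sqrt K ≤ C := by
    have h1 : 0 < 2 / ((γ + 1) * Real.sqrt a) := by positivity
    rw [hC_def]; linarith
  have hC1 : 1 ≤ C := by
    have h1 : 0 < 2 / ((γ + 1) * Real.sqrt a) := by positivity
    rw [hC_def]; linarith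
  have hCa : 2 / ((γ + 1) * Real.sqrt a) ≤ C := by
    rw [hC_def]; linarith
  refine ⟨C, hC, ?_⟩
  intro lam hlam s hs
  set f : ℝ → ℝ := fun z => 1 / Real.sqrt (a * z ^ (1 - γ) + lam ^ 2) with hf_def
  have hf_nonneg : ∀ z, 0 ≤ f z := fun z => by positivity
  have hf_le : ∀ z : ℝ, 0 ≤ z → f z ≤ 1 / lam := by
    intro z hz
    have h1 : (0:ℝ) ≤ z ^ (1 - γ) := rpow_nonneg hz _
    have h2 : lam ≤ Real.sqrt (a * z ^ (1 - γ) + lam ^ 2) :=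
      Real.le_sqrt_of_sq_le (by nlinarith)
    exact one_div_le_one_div_of_le hlam h2
  have hmeas : Measurable f := by
    have h1 : Measurable fun z : ℝ => z ^ (1 - γ) := by measurability
    simp only [hf_def, one_div]
    exact (((h1.const_mul a).add_const _).sqrt).inv
  have hint : ∀ c d : ℝ, 0 ≤ c → 0 ≤ d → IntervalIntegrable f volume c d := by
    intro c d hc hd
    apply (intervalIntegrable_const (c := 1 / lam)).mono_fun
      hmeas.aestronglyMeasurable
    filter_upwards [ae_restrict_mem measurableSet_uIoc] with x hx
    have hx0 : 0 ≤ x := le_trans (le_min hc hd) hx.1.le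
    rw [Real.norm_eq_abs, Real.norm_eq_abs, abs_of_nonneg (hf_nonneg x),
      abs_of_nonneg (by positivity : (0:ℝ) ≤ 1 / lam)]
    exact hf_le x hx0
  have hsplit : ∀ m : ℝ, 0 ≤ m → (∀ z ∈ Icc (s/2) s, m ≤ f z) →
      (s / 2) * m ≤ ∫ z in (0:ℝ)..s, f z := by
    intro m hm hmf
    have h1 : (∫ z in (0:ℝ)..s, f z) =
        (∫ z in (0:ℝ)..(s/2), f z) + ∫ z in (s/2)..s, f z :=
      (integral_add_adjacent_intervals (hint 0 (s/2) le_rfl (by linarith))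
        (hint (s/2) s (by linarith) hs.le)).symm
    have h2 : (0:ℝ) ≤ ∫ z in (0:ℝ)..(s/2), f z :=
      intervalIntegral.integral_nonneg (by linarith) (fun u _ => hf_nonneg u)
    have h3 : (s / 2) * m ≤ ∫ z in (s/2)..s, f z := by
      calc (s / 2) * m = ∫ _ in (s/2)..s, m := by
            rw [intervalIntegral.integral_const, smul_eq_mul]; ring
      _ ≤ ∫ z in (s/2)..s, f z :=
            intervalIntegral.integral_mono_on (by linarith)
              (intervalIntegrable_const (c := m))
              (hint (s/2) s (by linarith) hs.le) hmf
    linarith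
  have hz_half : ∀ z ∈ Icc (s/2) s, z ^ (1 - γ) ≤ 2 ^ (γ - 1) * s ^ (1 - γ) := by
    intro z hz
    have h1 : z ^ (1 - γ) ≤ (s/2) ^ (1 - γ) :=
      rpow_le_rpow_of_nonpos (by linarith) hz.1 (by linarith)
    have h2 : (s/2) ^ (1 - γ) = 2 ^ (γ - 1) * s ^ (1 - γ) := by
      rw [div_rpow hs.le (by norm_num : (0:ℝ) ≤ 2), div_eq_mul_inv,
        ← Real.rpow_neg (by norm_num : (0:ℝ) ≤ 2), show -(1 - γ) = γ - 1 by ring]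
      ring
    linarith
  have hTpow : (lam ^ ((-2) / (γ - 1))) ^ (γ - 1) = (lam ^ 2)⁻¹ := by
    rw [← Real.rpow_natCast lam 2, ← Real.rpow_neg hlam.le, ← Real.rpow_mul hlam.le]
    congr 1
    field_simp
    norm_num
  have hs1γ : s ^ (1 - γ) = (s ^ (γ - 1))⁻¹ := by
    rw [show (1 - γ) = -(γ - 1) by ring, Real.rpow_neg hs.le]
  have hsγ1 : 0 < s ^ (γ - 1) := rpow_pos_of_pos hs _
  constructor
  · -- regime 1 : s ≤ lam ^ (-2/(γ-1))
    intro hreg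
    have hlam2 : lam ^ 2 ≤ s ^ (1 - γ) := by
      have h1 : s ^ (γ - 1) ≤ (lam ^ ((-2) / (γ - 1))) ^ (γ - 1) :=
        rpow_le_rpow hs.le hreg hγ1.le
      rw [hTpow] at h1
      have h2 : lam ^ 2 * s ^ (γ - 1) ≤ 1 := by
        calc lam ^ 2 * s ^ (γ - 1) ≤ lam ^ 2 * (lam ^ 2)⁻¹ := by
              apply mul_le_mul_of_nonneg_left h1 (by positivity)
        _ = 1 := mul_inv_cancel₀ (by positivity)
      rw [hs1γ, ← one_div, le_div_iff₀ hsγ1]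
      exact h2
    constructor
    · -- lower bound, regime 1
      have key : ∀ z ∈ Icc (s/2) s, (Real.sqrt K)⁻¹ * s ^ ((γ - 1)/2) ≤ f z := by
        intro z hz
        have hz0 : 0 < z := lt_of_lt_of_le (by linarith) hz.1
        have h3 : (0:ℝ) < s ^ (1 - γ) := rpow_pos_of_pos hs _
        have hb : a * z ^ (1 - γ) + lam ^ 2 ≤ K * s ^ (1 - γ) := by
          have h1 := hz_half z hz
          have h4 : lam ^ 2 ≤ 2 ^ (γ - 1) * s ^ (1 - γ) := by nlinarith
          rw [hK_def]; nlinarith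
        have h5 : Real.sqrt (a * z ^ (1 - γ) + lam ^ 2) ≤
            Real.sqrt K * s ^ ((1 - γ)/2) := by
          rw [show Real.sqrt K * s ^ ((1 - γ)/2) = Real.sqrt (K * s ^ (1 - γ)) by
            rw [Real.sqrt_mul hK.le, hsqrt_rpow s hs]]
          exact Real.sqrt_le_sqrt hb
        have h6 : (Real.sqrt K)⁻¹ * s ^ ((γ - 1)/2) =
            1 / (Real.sqrt K * s ^ ((1 - γ)/2)) := by
          rw [show (γ - 1)/2 = -((1 - γ)/2) by ring, Real.rpow_neg hs.le, one_div, mul_inv]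
        rw [h6]
        exact one_div_le_one_div_of_le (by positivity) h5
      have h6 := hsplit _ (by positivity) key
      calc C⁻¹ * s ^ ((1 + γ)/2) ≤ (2 * Real.sqrt K)⁻¹ * s ^ ((1 + γ)/2) := by
            apply mul_le_mul_of_nonneg_right _ (rpow_nonneg hs.le _)
            rw [inv_eq_one_div, inv_eq_one_div]
            exact one_div_le_one_div_of_le (by positivity) hC2K
      _ = (s/2) * ((Real.sqrt K)⁻¹ * s ^ ((γ - 1)/2)) := by
            rw [show (1 + γ)/2 = 1 + (γ - 1)/2 by ring, Real.rpow_add hs, Real.rpow_one]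
            field_simp
      _ ≤ _ := h6
    · -- upper bound, regime 1
      have hupper : (∫ z in (0:ℝ)..s, f z) ≤
          ∫ z in (0:ℝ)..s, (Real.sqrt a)⁻¹ * z ^ ((γ - 1)/2) := by
        rw [intervalIntegral.integral_of_le hs.le, intervalIntegral.integral_of_le hs.le]
        apply setIntegral_mono_on (hint 0 s le_rfl hs.le).1
          ((intervalIntegrable_rpow' (by linarith : (-1:ℝ) < (γ-1)/2)).const_mul _).1
          measurableSet_Ioc
        intro x hx
        have hx0 : 0 < x := hx.1
        have h1 : Real.sqrt (a * x ^ (1 - γ)) ≤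
            Real.sqrt (a * x ^ (1 - γ) + lam ^ 2) :=
          Real.sqrt_le_sqrt (by linarith [sq_nonneg lam])
        have hxp : 0 < x ^ (1 - γ) := rpow_pos_of_pos hx0 _
        have h2 : 0 < Real.sqrt (a * x ^ (1 - γ)) := sqrt_pos.mpr (by positivity)
        calc f x ≤ 1 / Real.sqrt (a * x ^ (1 - γ)) := one_div_le_one_div_of_le h2 h1
        _ = (Real.sqrt a)⁻¹ * x ^ ((γ - 1)/2) := by
            rw [Real.sqrt_mul ha.le, hsqrt_rpow x hx0, one_div, mul_inv,
              ← Real.rpow_neg hx0.le, show -((1 - γ)/2) = (γ - 1)/2 by ring]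
      have hcomp : (∫ z in (0:ℝ)..s, (Real.sqrt a)⁻¹ * z ^ ((γ - 1)/2)) =
          (Real.sqrt a)⁻¹ * (s ^ ((1 + γ)/2) / ((1 + γ)/2)) := by
        rw [intervalIntegral.integral_const_mul, integral_rpow (Or.inl (by linarith)),
          Real.zero_rpow (by intro h; nlinarith [h] : (γ - 1)/2 + 1 ≠ 0),
          show (γ - 1)/2 + 1 = (1 + γ)/2 by ring, sub_zero]
      refine hupper.trans ?_
      rw [hcomp]
      have hga : (γ + 1) * Real.sqrt a ≠ 0 := by positivity
      calc (Real.sqrt a)⁻¹ * (s ^ ((1 + γ)/2) / ((1 + γ)/2))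
          = 2 / ((γ + 1) * Real.sqrt a) * s ^ ((1 + γ)/2) := by
            field_simp
            ring
      _ ≤ C * s ^ ((1 + γ)/2) :=
            mul_le_mul_of_nonneg_right hCa (rpow_nonneg hs.le _)
  · -- regime 2
    intro hreg
    have hlam2 : s ^ (1 - γ) ≤ lam ^ 2 := by
      have h1 : (lam ^ ((-2) / (γ - 1))) ^ (γ - 1) ≤ s ^ (γ - 1) :=
        rpow_le_rpow (rpow_nonneg hlam.le _) hreg hγ1.le
      rw [hTpow] at h1
      rw [hs1γ, ← one_div, div_le_iff₀ hsγ1, mul_comm]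
      calc (1:ℝ) = (lam ^ 2)⁻¹ * lam ^ 2 := (inv_mul_cancel₀ (by positivity)).symm
      _ ≤ s ^ (γ - 1) * lam ^ 2 := mul_le_mul_of_nonneg_right h1 (by positivity)
    constructor
    · -- lower bound, regime 2
      have key : ∀ z ∈ Icc (s/2) s, (Real.sqrt K)⁻¹ * lam⁻¹ ≤ f z := by
        intro z hz
        have hz0 : 0 < z := lt_of_lt_of_le (by linarith) hz.1
        have hb : a * z ^ (1 - γ) + lam ^ 2 ≤ K * lam ^ 2 := by
          have h1 := hz_half z hz
          have e1 : a * z ^ (1 - γ) ≤ a * (2 ^ (γ - 1) * s ^ (1 - γ)) :=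
            mul_le_mul_of_nonneg_left h1 ha.le
          have e2 : a * (2 ^ (γ - 1) * s ^ (1 - γ)) ≤ a * (2 ^ (γ - 1) * lam ^ 2) :=
            mul_le_mul_of_nonneg_left (mul_le_mul_of_nonneg_left hlam2 h2pow.le) ha.le
          have e3 : lam ^ 2 ≤ 2 ^ (γ - 1) * lam ^ 2 :=
            le_mul_of_one_le_left (sq_nonneg lam) h2pow1
          rw [hK_def]; nlinarith [e1, e2, e3]
        have h5 : Real.sqrt (a * z ^ (1 - γ) + lam ^ 2) ≤ Real.sqrt K * lam := by
          rw [show Real.sqrt K * lam = Real.sqrt (K * lam ^ 2) by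
            rw [Real.sqrt_mul hK.le, Real.sqrt_sq hlam.le]]
          exact Real.sqrt_le_sqrt hb
        have h6 : (Real.sqrt K)⁻¹ * lam⁻¹ = 1 / (Real.sqrt K * lam) := by
          rw [one_div, mul_inv]
        rw [h6]
        exact one_div_le_one_div_of_le (by positivity) h5
      have h6 := hsplit _ (by positivity) key
      calc C⁻¹ * (s / lam) ≤ (2 * Real.sqrt K)⁻¹ * (s / lam) := by
            apply mul_le_mul_of_nonneg_right _ (by positivity)
            rw [inv_eq_one_div, inv_eq_one_div]
            exact one_div_le_one_div_of_le (by positivity) hC2K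
      _ = (s/2) * ((Real.sqrt K)⁻¹ * lam⁻¹) := by
            rw [mul_inv, div_eq_mul_inv]; ring
      _ ≤ _ := h6
    · -- upper bound, regime 2
      have h1 : (∫ z in (0:ℝ)..s, f z) ≤ ∫ _ in (0:ℝ)..s, 1 / lam :=
        intervalIntegral.integral_mono_on hs.le (hint 0 s le_rfl hs.le)
          (intervalIntegrable_const (c := 1 / lam))
          (fun x hx => hf_le x hx.1)
      rw [intervalIntegral.integral_const, smul_eq_mul, sub_zero] at h1
      calc (∫ z in (0:ℝ)..s, f z) ≤ s * (1 / lam) := h1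
      _ = 1 * (s / lam) := by field_simp
      _ ≤ C * (s / lam) := by
            apply mul_le_mul_of_nonneg_right hC1 (by positivity)
end

section
/- Let γ > 1 and φ = 2/(1+γ). Suppose V : (0,∞) → (0,∞) satisfies (V'(t))² = (2/(γ-1)) V(t)^{1-γ} + λ² for all t > 0, with V(0⁺) = 0, V increasing, and λ > 0. Then there is a constant C = C(γ) such that for all t > 0: C⁻¹ t^φ ≤ V(t) ≤ C t^φ when t ≤ λ^{(1+γ)/(1-γ)}, and C⁻¹ λ t ≤ V(t) ≤ C λ t when t ≥ λ^{(1+γ)/(1-γ)}. -/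
set_option maxHeartbeats 1000000
open Real Filter Set

lemma aux_mono (g g' : ℝ → ℝ) (hd : ∀ t > (0:ℝ), HasDerivAt g (g' t) t)
    (h0 : ∀ t > (0:ℝ), 0 ≤ g' t) : MonotoneOn g (Set.Ioi 0) := by
  apply monotoneOn_of_deriv_nonneg (convex_Ioi 0)
  · exact fun t ht => (hd t ht).continuousAt.continuousWithinAt
  · intro t ht
    rw [interior_Ioi] at ht
    exact (hd t ht).differentiableAt.differentiableWithinAt
  · intro t ht
    rw [interior_Ioi] at ht
    rw [(hd t ht).deriv]
    exact h0 t ht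


lemma aux_limit_lb (g : ℝ → ℝ) (hmono : MonotoneOn g (Set.Ioi 0))
    (hlim : Tendsto g (nhdsWithin 0 (Set.Ioi 0)) (nhds 0)) : ∀ t > (0:ℝ), 0 ≤ g t := by
  intro t ht
  refine le_of_tendsto hlim ?_
  filter_upwards [eventually_of_mem (Ioc_mem_nhdsGT_of_mem
    (Set.mem_Ico.2 ⟨le_refl 0, ht⟩)) (fun x hx => hx)] with s hs
  exact hmono hs.1 ht hs.2

lemma aux_sqrt_add (x y : ℝ) (hx : 0 ≤ x) (hy : 0 ≤ y) :
    Real.sqrt (x + y^2) ≤ Real.sqrt x + y := by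
  have h1 : Real.sqrt (x + y^2) ≤ Real.sqrt ((Real.sqrt x + y)^2) := by
    apply Real.sqrt_le_sqrt
    nlinarith [Real.sq_sqrt hx, Real.sqrt_nonneg x]
  rwa [Real.sqrt_sq (by positivity)] at h1

lemma aux_sq_rpow (x p : ℝ) (hx : 0 ≤ x) : (x ^ (p/2))^2 = x ^ p := by
  rw [← Real.rpow_natCast (x ^ (p/2)) 2, ← Real.rpow_mul hx]
  norm_num

lemma aux_deriv_nonneg (g : ℝ → ℝ) (d t : ℝ) (ht : 0 < t)
    (hd : HasDerivAt g d t) (hm : StrictMonoOn g (Set.Ioi 0)) : 0 ≤ d := by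
  have hs : Tendsto (slope g t) (nhdsWithin t {t}ᶜ) (nhds d) :=
    hasDerivAt_iff_tendsto_slope.1 hd
  have hs' : Tendsto (slope g t) (nhdsWithin t (Set.Ioi t)) (nhds d) :=
    hs.mono_left (nhdsWithin_mono t (fun x hx => ne_of_gt hx))
  refine ge_of_tendsto hs' ?_
  filter_upwards [self_mem_nhdsWithin] with s hs2
  have hts : t < s := hs2
  have h1 : g t < g s := hm ht (lt_trans ht hts) hts
  rw [slope_def_field]
  exact div_nonneg (by linarith) (by linarith)

lemma aux_no_cross (g g' : ℝ → ℝ)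
    (hd : ∀ t > (0:ℝ), HasDerivAt g (g' t) t)
    (hpos : ∀ t > (0:ℝ), g t ≤ 0 → 0 < g' t)
    (h0 : ∀ᶠ t in nhdsWithin 0 (Set.Ioi 0), 0 < g t) :
    ∀ t > (0:ℝ), 0 < g t := by
  intro s hs
  by_contra hgs
  push_neg at hgs
  obtain ⟨t₁, hgt₁, ht₁0, ht₁s⟩ := (h0.and (eventually_of_mem
    (Ioo_mem_nhdsGT_of_mem (Set.mem_Ico.2 ⟨le_refl 0, hs⟩)) (fun x hx => hx))).exists
  set K : Set ℝ := {t ∈ Set.Icc t₁ s | g t ≤ 0} with hK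
  have hcont : ContinuousOn g (Set.Icc t₁ s) := fun t ht =>
    (hd t (lt_of_lt_of_le ht₁0 ht.1)).continuousAt.continuousWithinAt
  have hKclosed : IsClosed K := by
    have : K = Set.Icc t₁ s ∩ g ⁻¹' (Set.Iic 0) := rfl
    rw [this]
    exact ContinuousOn.preimage_isClosed_of_isClosed hcont isClosed_Icc isClosed_Iic
  have hKne : K.Nonempty := ⟨s, ⟨le_of_lt ht₁s, le_refl s⟩, hgs⟩
  have hKbdd : BddBelow K := ⟨t₁, fun t ht => ht.1.1⟩
  set T := sInf K with hT
  have hTK : T ∈ K := hKclosed.csInf_mem hKne hKbdd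
  have hTt₁ : t₁ < T := by
    rcases lt_or_eq_of_le hTK.1.1 with h | h
    · exact h
    · exact absurd hTK.2 (not_le.2 (h ▸ hgt₁))
  have hT0 : 0 < T := lt_trans ht₁0 hTt₁
  have hbefore : ∀ t ∈ Set.Ico t₁ T, 0 < g t := by
    intro t ht
    by_contra h
    push_neg at h
    have : t ∈ K := ⟨⟨ht.1, le_trans (le_of_lt ht.2) hTK.1.2⟩, h⟩
    exact absurd (csInf_le hKbdd this) (not_le.2 ht.2)
  have hgT : 0 < g' T := hpos T hT0 hTK.2
  have hsl : Tendsto (slope g T) (nhdsWithin T {T}ᶜ) (nhds (g' T)) :=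
    hasDerivAt_iff_tendsto_slope.1 (hd T hT0)
  have hsl' : Tendsto (slope g T) (nhdsWithin T (Set.Iio T)) (nhds (g' T)) :=
    hsl.mono_left (nhdsWithin_mono T (fun x hx => ne_of_lt hx))
  have hev : ∀ᶠ t in nhdsWithin T (Set.Iio T), 0 < slope g T t :=
    hsl'.eventually (eventually_gt_nhds hgT)
  have hev2 : ∀ᶠ t in nhdsWithin T (Set.Iio T), t ∈ Set.Ico t₁ T :=
    eventually_of_mem (Ico_mem_nhdsLT_of_mem (Set.mem_Ioc.2 ⟨hTt₁, le_refl T⟩)) (fun x hx => hx)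
  have : NeBot (nhdsWithin T (Set.Iio T)) := nhdsLT_neBot T
  obtain ⟨t, hslope, htmem⟩ := (hev.and hev2).exists
  have hgt : 0 < g t := hbefore t htmem
  have hnum : 0 < g t - g T := by linarith [hTK.2]
  have hden : t - T < 0 := sub_neg.2 htmem.2
  rw [slope_def_field] at hslope
  have : (g t - g T) / (t - T) < 0 := div_neg_of_pos_of_neg hnum hden
  exact absurd hslope (not_lt.2 this.le)

theorem first_order_ode_growth (γ φ : ℝ) (hγ : 1 < γ) (hφ : φ = 2 / (1 + γ)) :
    ∃ C > 0, ∀ lam > (0:ℝ), ∀ V V' : ℝ → ℝ,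
      (∀ t > (0:ℝ), 0 < V t) →
      (∀ t > (0:ℝ), HasDerivAt V (V' t) t) →
      (∀ t > (0:ℝ), (V' t) ^ 2 = (2 / (γ - 1)) * (V t) ^ (1 - γ) + lam ^ 2) →
      Tendsto V (nhdsWithin 0 (Set.Ioi 0)) (nhds 0) →
      StrictMonoOn V (Set.Ioi 0) →
      ∀ t > (0:ℝ),
        (t ≤ lam ^ ((1 + γ) / (1 - γ)) → C⁻¹ * t ^ φ ≤ V t ∧ V t ≤ C * t ^ φ) ∧
        (lam ^ ((1 + γ) / (1 - γ)) ≤ t →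
          C⁻¹ * (lam * t) ≤ V t ∧ V t ≤ C * (lam * t)) := by
  have hγ1 : (0:ℝ) < γ - 1 := by linarith
  have h1γ : (0:ℝ) < 1 + γ := by linarith
  have hφpos : 0 < φ := by rw [hφ]; positivity
  have hφlt1 : φ < 1 := by rw [hφ]; rw [div_lt_one h1γ]; linarith
  set c : ℝ := 2 / (γ - 1) with hc_def
  have hc : 0 < c := by positivity
  set B : ℝ := Real.sqrt c with hB_def
  have hB : 0 < B := Real.sqrt_pos.2 hc
  set k : ℝ := ((1 + γ) / 2) * B with hk_def
  have hk : 0 < k := by positivity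
  set A : ℝ := ((B + 1) / φ) ^ φ with hA_def
  have hA : 0 < A := Real.rpow_pos_of_pos (by positivity) _
  have hexp1 : φ * ((1 + γ) / 2) = 1 := by rw [hφ]; field_simp
  have hAkey : A ^ ((1 + γ) / 2) = (B + 1) / φ := by
    rw [hA_def, ← Real.rpow_mul (by positivity), hexp1, Real.rpow_one]
  have hA1 : A ^ ((1 + γ) / 2) * A ^ ((1 - γ) / 2) = A := by
    rw [← Real.rpow_add hA, show (1 + γ) / 2 + (1 - γ) / 2 = (1:ℝ) by ring, Real.rpow_one]
  have e1 : A ^ ((1 + γ) / 2) * φ = B + 1 := by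
    rw [hAkey]
    field_simp
  have hkeyA : B * A ^ ((1 - γ) / 2) < A * φ := by
    have ha : 0 < A ^ ((1 - γ) / 2) := Real.rpow_pos_of_pos hA _
    have h2 : A * φ = (B + 1) * A ^ ((1 - γ) / 2) := by
      calc A * φ = (A ^ ((1 + γ) / 2) * A ^ ((1 - γ) / 2)) * φ := by rw [hA1]
        _ = (A ^ ((1 + γ) / 2) * φ) * A ^ ((1 - γ) / 2) := by ring
        _ = (B + 1) * A ^ ((1 - γ) / 2) := by rw [e1]
    nlinarith
  set C : ℝ := (k ^ φ)⁻¹ + A + 2 with hC_def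
  have hkφ : 0 < k ^ φ := Real.rpow_pos_of_pos hk _
  have hC : 0 < C := by positivity
  refine ⟨C, hC, ?_⟩
  intro lam hlam V V' hVpos hVd hVode hVlim hVmono
  -- basic facts about V'
  have hV'nonneg : ∀ t > (0:ℝ), 0 ≤ V' t := by
    intro t ht
    have hs : Tendsto (slope V t) (nhdsWithin t {t}ᶜ) (nhds (V' t)) :=
      hasDerivAt_iff_tendsto_slope.1 (hVd t ht)
    have hs' : Tendsto (slope V t) (nhdsWithin t (Set.Ioi t)) (nhds (V' t)) :=
      hs.mono_left (nhdsWithin_mono t (fun x hx => ne_of_gt hx))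
    refine ge_of_tendsto hs' ?_
    filter_upwards [self_mem_nhdsWithin] with s hs2
    rw [slope_def_field]
    have hts : t < s := hs2
    have h1 : V t < V s := hVmono ht (lt_trans ht hts) hts
    exact div_nonneg (by linarith) (by linarith)
  have hV'eq : ∀ t > (0:ℝ), V' t = Real.sqrt (c * (V t) ^ (1 - γ) + lam ^ 2) := by
    intro t ht
    rw [← hVode t ht, Real.sqrt_sq (hV'nonneg t ht)]
  have hrad_nonneg : ∀ t > (0:ℝ), 0 ≤ c * (V t) ^ (1 - γ) := by
    intro t ht
    have := Real.rpow_nonneg (hVpos t ht).le (1 - γ)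
    positivity
  have hV'lam : ∀ t > (0:ℝ), lam ≤ V' t := by
    intro t ht
    rw [hV'eq t ht]
    calc lam = Real.sqrt (lam ^ 2) := (Real.sqrt_sq hlam.le).symm
      _ ≤ _ := Real.sqrt_le_sqrt (by linarith [hrad_nonneg t ht])
  have hV'B : ∀ t > (0:ℝ), B * (V t) ^ ((1 - γ) / 2) ≤ V' t := by
    intro t ht
    rw [hV'eq t ht]
    have h1 : (B * (V t) ^ ((1 - γ) / 2)) ^ 2 = c * (V t) ^ (1 - γ) := by
      rw [mul_pow, hB_def, Real.sq_sqrt hc.le, aux_sq_rpow _ _ (hVpos t ht).le]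
    calc B * (V t) ^ ((1 - γ) / 2)
        = Real.sqrt ((B * (V t) ^ ((1 - γ) / 2)) ^ 2) := by
          rw [Real.sqrt_sq (mul_nonneg hB.le (Real.rpow_nonneg (hVpos t ht).le _))]
      _ ≤ _ := by
          rw [h1]
          exact Real.sqrt_le_sqrt (by nlinarith [sq_nonneg lam])
  have hmul_lim : ∀ a : ℝ, Tendsto (fun u : ℝ => a * u) (nhdsWithin 0 (Set.Ioi 0)) (nhds 0) := by
    intro a
    have h1 : Tendsto (fun u : ℝ => a * u) (nhds 0) (nhds (a * 0)) :=
      (continuous_const.mul continuous_id).tendsto 0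
    rw [mul_zero] at h1
    exact h1.mono_left nhdsWithin_le_nhds
  -- lower bound 1 : lam * t ≤ V t
  have hlow1 : ∀ t > (0:ℝ), lam * t ≤ V t := by
    have hd : ∀ s > (0:ℝ), HasDerivAt (fun u => V u - lam * u) (V' s - lam) s := by
      intro s hs
      exact (hVd s hs).sub (by simpa using (hasDerivAt_id s).const_mul lam)
    have hmono := aux_mono _ _ hd (fun s hs => sub_nonneg.2 (hV'lam s hs))
    have hlim : Tendsto (fun u => V u - lam * u) (nhdsWithin 0 (Set.Ioi 0)) (nhds 0) := by
      simpa using hVlim.sub (hmul_lim lam)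
    intro t ht
    have := aux_limit_lb _ hmono hlim t ht
    linarith
  -- lower bound 2 : (k*t)^φ ≤ V t
  have hp2 : (0:ℝ) < (1 + γ) / 2 := by linarith
  have hlow2 : ∀ t > (0:ℝ), (k * t) ^ φ ≤ V t := by
    have hd : ∀ s > (0:ℝ), HasDerivAt (fun u => (V u) ^ ((1 + γ) / 2) - k * u)
        (((1 + γ) / 2) * (V s) ^ ((1 + γ) / 2 - 1) * V' s - k) s := by
      intro s hs
      have h : HasDerivAt (fun u => (V u) ^ ((1 + γ) / 2) - k * u)
          (V' s * ((1 + γ) / 2) * V s ^ ((1 + γ) / 2 - 1) - k) s :=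
        ((hVd s hs).rpow_const (Or.inl (ne_of_gt (hVpos s hs)))).sub
          (by simpa using (hasDerivAt_id s).const_mul k)
      have he : (1 + γ) / 2 * V s ^ ((1 + γ) / 2 - 1) * V' s - k =
          V' s * ((1 + γ) / 2) * V s ^ ((1 + γ) / 2 - 1) - k := by ring
      rw [he]
      exact h
    have hnn : ∀ s > (0:ℝ), 0 ≤ ((1 + γ) / 2) * (V s) ^ ((1 + γ) / 2 - 1) * V' s - k := by
      intro s hs
      have h1 : B * (V s) ^ ((1 - γ) / 2) ≤ V' s := hV'B s hs
      have hv := hVpos s hs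
      have h2 : (V s) ^ ((1 + γ) / 2 - 1) * ((V s) ^ ((1 - γ) / 2)) = 1 := by
        rw [← Real.rpow_add hv, show (1 + γ) / 2 - 1 + (1 - γ) / 2 = (0:ℝ) by ring,
          Real.rpow_zero]
      have h3 : 0 ≤ (V s) ^ ((1 + γ) / 2 - 1) := Real.rpow_nonneg hv.le _
      have h4 : (V s) ^ ((1 + γ) / 2 - 1) * (B * (V s) ^ ((1 - γ) / 2)) ≤
          (V s) ^ ((1 + γ) / 2 - 1) * V' s := mul_le_mul_of_nonneg_left h1 h3
      have h5 : (V s) ^ ((1 + γ) / 2 - 1) * (B * (V s) ^ ((1 - γ) / 2)) = B := by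
        rw [mul_comm B, ← mul_assoc, h2, one_mul]
      have h6 : B ≤ (V s) ^ ((1 + γ) / 2 - 1) * V' s := h5 ▸ h4
      rw [hk_def]
      nlinarith [mul_le_mul_of_nonneg_left h6 hp2.le]
    have hmono := aux_mono _ _ hd hnn
    have hlim : Tendsto (fun u => (V u) ^ ((1 + γ) / 2) - k * u)
        (nhdsWithin 0 (Set.Ioi 0)) (nhds 0) := by
      have hrc : ContinuousAt (fun x : ℝ => x ^ ((1 + γ) / 2)) 0 :=
        Real.continuousAt_rpow_const 0 _ (Or.inr hp2.le)
      have h1 : Tendsto (fun u => (V u) ^ ((1 + γ) / 2)) (nhdsWithin 0 (Set.Ioi 0))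
          (nhds ((0:ℝ) ^ ((1 + γ) / 2))) := (hrc.tendsto).comp hVlim
      rw [Real.zero_rpow hp2.ne'] at h1
      simpa using h1.sub (hmul_lim k)
    intro t ht
    have h0 := aux_limit_lb _ hmono hlim t ht
    have h1 : k * t ≤ (V t) ^ ((1 + γ) / 2) := by linarith
    have h2 : ((V t) ^ ((1 + γ) / 2)) ^ φ = V t := by
      rw [← Real.rpow_mul (hVpos t ht).le, show (1 + γ) / 2 * φ = (1:ℝ) by
        rw [mul_comm]; exact hexp1, Real.rpow_one]
    calc (k * t) ^ φ ≤ ((V t) ^ ((1 + γ) / 2)) ^ φ :=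
          Real.rpow_le_rpow (by positivity) h1 hφpos.le
      _ = V t := h2
  -- upper bound : V t ≤ A * t^φ + lam * t
  have hexp2 : φ * ((1 - γ) / 2) = φ - 1 := by
    rw [hφ]; field_simp; ring
  have hup : ∀ t > (0:ℝ), V t ≤ A * t ^ φ + lam * t := by
    intro t ht
    refine le_of_forall_pos_le_add ?_
    intro ε hε
    have key : ∀ s > (0:ℝ), 0 < A * s ^ φ + lam * s + ε - V s := by
      apply aux_no_cross _ (fun s => A * (φ * s ^ (φ - 1)) + lam - V' s)
      · intro s hs
        have h1 : HasDerivAt (fun u : ℝ => A * u ^ φ) (A * (φ * s ^ (φ - 1))) s :=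
          (Real.hasDerivAt_rpow_const (Or.inl (ne_of_gt hs))).const_mul A
        have h2 : HasDerivAt (fun u : ℝ => lam * u) lam s := by
          simpa using (hasDerivAt_id s).const_mul lam
        exact ((h1.add h2).add_const ε).sub (hVd s hs)
      · intro s hs hle
        have hsφ : 0 < s ^ φ := Real.rpow_pos_of_pos hs _
        have hAs : 0 < A * s ^ φ := by positivity
        have hVA : A * s ^ φ < V s := by nlinarith [mul_pos hlam hs]
        have hr1 : (V s) ^ (1 - γ) < (A * s ^ φ) ^ (1 - γ) :=
          Real.rpow_lt_rpow_of_neg hAs hVA (by linarith)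
        have hr2 : V' s < Real.sqrt (c * (A * s ^ φ) ^ (1 - γ) + lam ^ 2) := by
          rw [hV'eq s hs]
          exact Real.sqrt_lt_sqrt (by nlinarith [hrad_nonneg s hs, sq_nonneg lam])
            (by nlinarith [hr1, hc])
        have hBA : (0:ℝ) ≤ B * (A * s ^ φ) ^ ((1 - γ) / 2) :=
          mul_nonneg hB.le (Real.rpow_nonneg hAs.le _)
        have hr3 : Real.sqrt (c * (A * s ^ φ) ^ (1 - γ) + lam ^ 2) ≤
            B * (A * s ^ φ) ^ ((1 - γ) / 2) + lam := by
          have h4 : c * (A * s ^ φ) ^ (1 - γ) = (B * (A * s ^ φ) ^ ((1 - γ) / 2)) ^ 2 := by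
            rw [mul_pow, hB_def, Real.sq_sqrt hc.le, aux_sq_rpow _ _ hAs.le]
          rw [h4]
          have h5 := aux_sqrt_add ((B * (A * s ^ φ) ^ ((1 - γ) / 2)) ^ 2) lam
            (sq_nonneg _) hlam.le
          rwa [Real.sqrt_sq hBA] at h5
        have hr5 : (A * s ^ φ) ^ ((1 - γ) / 2) = A ^ ((1 - γ) / 2) * s ^ (φ - 1) := by
          rw [Real.mul_rpow hA.le (Real.rpow_nonneg hs.le _), ← Real.rpow_mul hs.le, hexp2]
        have hsp : 0 < s ^ (φ - 1) := Real.rpow_pos_of_pos hs _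
        have hr6 : B * (A ^ ((1 - γ) / 2) * s ^ (φ - 1)) + lam < A * (φ * s ^ (φ - 1)) + lam := by
          nlinarith [mul_lt_mul_of_pos_right hkeyA hsp]
        have hfin : V' s < A * (φ * s ^ (φ - 1)) + lam := by
          calc V' s < Real.sqrt (c * (A * s ^ φ) ^ (1 - γ) + lam ^ 2) := hr2
            _ ≤ B * (A * s ^ φ) ^ ((1 - γ) / 2) + lam := hr3
            _ = B * (A ^ ((1 - γ) / 2) * s ^ (φ - 1)) + lam := by rw [hr5]
            _ < _ := hr6
        linarith
      · have hev1 : ∀ᶠ s in nhdsWithin 0 (Set.Ioi 0), V s < ε :=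
          hVlim.eventually (eventually_lt_nhds hε)
        filter_upwards [hev1, self_mem_nhdsWithin] with s h1 h2
        have hs : (0:ℝ) < s := h2
        nlinarith [mul_pos hlam hs, mul_nonneg hA.le (Real.rpow_nonneg hs.le φ)]
    have := key t ht
    linarith
  -- crossover computations
  intro t ht
  set t0 : ℝ := lam ^ ((1 + γ) / (1 - γ)) with ht0_def
  have ht0 : 0 < t0 := Real.rpow_pos_of_pos hlam _
  have h1γ' : (1:ℝ) - γ ≠ 0 := by intro h; linarith [hγ1]
  have hexp3 : (1 + γ) / (1 - γ) * (1 - φ) = -1 := by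
    rw [hφ]; field_simp; ring
  have hexp4 : (1 + γ) / (1 - γ) * (φ - 1) = 1 := by
    rw [hφ]; field_simp; ring
  have hcross1 : t ≤ t0 → lam * t ≤ t ^ φ := by
    intro htt0
    have e1 : t0 ^ (1 - φ) = lam⁻¹ := by
      rw [ht0_def, ← Real.rpow_mul hlam.le, hexp3, Real.rpow_neg_one]
    have e2 : t ^ (1 - φ) ≤ lam⁻¹ := by
      rw [← e1]
      exact Real.rpow_le_rpow ht.le htt0 (by linarith)
    have e3 : t ^ (1 - φ) * t ^ φ = t := by
      rw [← Real.rpow_add ht, show 1 - φ + φ = (1:ℝ) by ring, Real.rpow_one]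
    calc lam * t = lam * (t ^ (1 - φ) * t ^ φ) := by rw [e3]
      _ ≤ lam * (lam⁻¹ * t ^ φ) := by
          apply mul_le_mul_of_nonneg_left _ hlam.le
          exact mul_le_mul_of_nonneg_right e2 (Real.rpow_pos_of_pos ht φ).le
      _ = t ^ φ := by rw [← mul_assoc, mul_inv_cancel₀ hlam.ne', one_mul]
  have hcross2 : t0 ≤ t → t ^ φ ≤ lam * t := by
    intro htt0
    have e1 : t0 ^ (φ - 1) = lam := by
      rw [ht0_def, ← Real.rpow_mul hlam.le, hexp4, Real.rpow_one]
    have e2 : t ^ (φ - 1) ≤ lam := by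
      rw [← e1]
      exact Real.rpow_le_rpow_of_nonpos ht0 htt0 (by linarith)
    have e3 : t ^ (φ - 1) * t ^ (1:ℝ) = t ^ φ := by
      rw [← Real.rpow_add ht, show φ - 1 + 1 = φ by ring]
    calc t ^ φ = t ^ (φ - 1) * t := by rw [← e3, Real.rpow_one]
      _ ≤ lam * t := mul_le_mul_of_nonneg_right e2 ht.le
  have htφ : 0 < t ^ φ := Real.rpow_pos_of_pos ht _
  have hkφinv : 0 < (k ^ φ)⁻¹ := inv_pos.2 hkφ
  have hCinv1 : C⁻¹ ≤ k ^ φ := by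
    rw [← inv_inv (k ^ φ)]
    apply inv_anti₀ (by positivity)
    rw [hC_def]; linarith [hA]
  have hCinv2 : C⁻¹ ≤ 1 := by
    rw [← inv_one]
    apply inv_anti₀ one_pos
    rw [hC_def]; linarith [hA]
  have hAC : A + 1 ≤ C := by rw [hC_def]; linarith
  constructor
  · intro htt0
    have h1 := hcross1 htt0
    constructor
    · calc C⁻¹ * t ^ φ ≤ k ^ φ * t ^ φ := mul_le_mul_of_nonneg_right hCinv1 htφ.le
        _ = (k * t) ^ φ := (Real.mul_rpow hk.le ht.le).symm
        _ ≤ V t := hlow2 t ht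
    · calc V t ≤ A * t ^ φ + lam * t := hup t ht
        _ ≤ A * t ^ φ + t ^ φ := by linarith
        _ = (A + 1) * t ^ φ := by ring
        _ ≤ C * t ^ φ := mul_le_mul_of_nonneg_right hAC htφ.le
  · intro htt0
    have h1 := hcross2 htt0
    have hlt : 0 < lam * t := by positivity
    constructor
    · calc C⁻¹ * (lam * t) ≤ 1 * (lam * t) := mul_le_mul_of_nonneg_right hCinv2 hlt.le
        _ = lam * t := one_mul _
        _ ≤ V t := hlow1 t ht
    · calc V t ≤ A * t ^ φ + lam * t := hup t ht
        _ ≤ A * (lam * t) + lam * t := by nlinarith [mul_le_mul_of_nonneg_left h1 hA.le]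
        _ = (A + 1) * (lam * t) := by ring
        _ ≤ C * (lam * t) := mul_le_mul_of_nonneg_right hAC hlt.le
end

section
/- Let γ ∈ (1,2) and C ≥ 1. Suppose (S_k)_{k≥0} is a sequence with S_0 = 0, S_1 ≥ 1/C, S_k nondecreasing, S_{k+1} ≤ C S_k for all k ≥ 1, and C⁻¹ S_k^{-γ} ≤ S_k - S_{k-1} ≤ C S_k^{-γ} for all k ≥ 1. Then there exists C' = C'(γ, C) such that (C')⁻¹ k^{1/(1+γ)} ≤ S_k ≤ C' k^{1/(1+γ)} for all k ≥ 1. -/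
open Real

lemma mvt_rpow_aux (p a b : ℝ) (hp : 1 ≤ p) (hb : 0 ≤ b) (hab : b < a) :
    p * b ^ (p - 1) * (a - b) ≤ a ^ p - b ^ p ∧
      a ^ p - b ^ p ≤ p * a ^ (p - 1) * (a - b) := by
  obtain ⟨c, hc, hceq⟩ := exists_hasDerivAt_eq_slope (fun x => x ^ p)
    (fun x => p * x ^ (p - 1)) hab
    (continuousOn_id.rpow_const fun x _ => Or.inr (by linarith))
    (fun x _ => Real.hasDerivAt_rpow_const (Or.inr hp))
  have hab' : 0 < a - b := by linarith
  have heq : a ^ p - b ^ p = p * c ^ (p - 1) * (a - b) := by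
    field_simp at hceq
    linarith [hceq]
  have hc1 : b ≤ c := le_of_lt hc.1
  have hc2 : c ≤ a := le_of_lt hc.2
  have hlo : b ^ (p - 1) ≤ c ^ (p - 1) :=
    Real.rpow_le_rpow hb hc1 (by linarith)
  have hhi : c ^ (p - 1) ≤ a ^ (p - 1) :=
    Real.rpow_le_rpow (hb.trans hc1) hc2 (by linarith)
  have hp0 : 0 < p := by linarith
  constructor
  · rw [heq]
    have := mul_le_mul_of_nonneg_left hlo hp0.le
    nlinarith
  · rw [heq]
    have := mul_le_mul_of_nonneg_left hhi hp0.le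
    nlinarith

theorem discrete_ode_subcritical (γ C : ℝ) (hγ1 : 1 < γ) (hγ2 : γ < 2) (hC : 1 ≤ C)
    (S : ℕ → ℝ) (h0 : S 0 = 0) (h1 : 1 / C ≤ S 1) (hmono : Monotone S)
    (hcomp : ∀ k : ℕ, 1 ≤ k → S (k + 1) ≤ C * S k)
    (hinc : ∀ k : ℕ, 1 ≤ k →
      C⁻¹ * (S k) ^ (-γ) ≤ S k - S (k - 1) ∧ S k - S (k - 1) ≤ C * (S k) ^ (-γ)) :
    ∃ C' > 0, ∀ k : ℕ, 1 ≤ k →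
      C'⁻¹ * (k:ℝ) ^ (1 / (1 + γ)) ≤ S k ∧ S k ≤ C' * (k:ℝ) ^ (1 / (1 + γ)) := by
  have hC0 : (0:ℝ) < C := by linarith
  obtain ⟨p, hpdef⟩ : ∃ p : ℝ, p = 1 + γ := ⟨_, rfl⟩
  rw [show (1:ℝ) + γ = p from hpdef.symm]
  have hp : (1:ℝ) ≤ p := by rw [hpdef]; linarith
  have hp0 : (0:ℝ) < p := by linarith
  -- positivity of S k for k ≥ 1
  have hS1 : 0 < S 1 := lt_of_lt_of_le (by positivity) h1
  have hSpos : ∀ k : ℕ, 1 ≤ k → 0 < S k := fun k hk =>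
    lt_of_lt_of_le hS1 (hmono hk)
  -- main induction: bounds on S k ^ p
  have key : ∀ k : ℕ, 1 ≤ k →
      (k:ℝ) * C ^ (-p) ≤ S k ^ p ∧ S k ^ p ≤ (k:ℝ) * (p * C) := by
    intro k hk
    induction k with
    | zero => omega
    | succ n ih =>
      rcases Nat.eq_or_lt_of_le hk with h | h
      · -- base case n + 1 = 1
        have hn : n = 0 := by omega
        subst hn
        obtain ⟨hlo, hhi⟩ := hinc 1 le_rfl
        simp only [Nat.sub_self, h0, sub_zero] at hlo hhi
        have hmul : S 1 ^ (-γ) * S 1 ^ γ = 1 := by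
          rw [← Real.rpow_add hS1]; simp
        have hSγ : 0 < S 1 ^ γ := Real.rpow_pos_of_pos hS1 γ
        have e1 : S 1 ^ p = S 1 * S 1 ^ γ := by
          rw [hpdef, Real.rpow_add hS1, Real.rpow_one]
        have hup : S 1 ^ p ≤ C := by
          rw [e1]
          calc S 1 * S 1 ^ γ ≤ (C * S 1 ^ (-γ)) * S 1 ^ γ :=
                mul_le_mul_of_nonneg_right hhi hSγ.le
            _ = C * (S 1 ^ (-γ) * S 1 ^ γ) := by ring
            _ = C := by rw [hmul, mul_one]
        have hdown : C⁻¹ ≤ S 1 ^ p := by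
          rw [e1]
          calc C⁻¹ = (C⁻¹ * S 1 ^ (-γ)) * S 1 ^ γ := by
                rw [mul_assoc, hmul, mul_one]
            _ ≤ S 1 * S 1 ^ γ := mul_le_mul_of_nonneg_right hlo hSγ.le
        constructor
        · push_cast
          rw [one_mul]
          refine le_trans ?_ hdown
          rw [Real.rpow_neg hC0.le]
          have : C ^ (1:ℝ) ≤ C ^ p := Real.rpow_le_rpow_of_exponent_le hC hp
          rw [Real.rpow_one] at this
          exact inv_anti₀ hC0 this
        · push_cast
          rw [one_mul]
          refine hup.trans ?_
          nlinarith
      · -- inductive step, n ≥ 1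
        have hn : 1 ≤ n := by omega
        obtain ⟨ihlo, ihhi⟩ := ih hn
        have hSn : 0 < S n := hSpos n hn
        have hSn1 : 0 < S (n+1) := hSpos (n+1) (by omega)
        obtain ⟨hlo, hhi⟩ := hinc (n+1) (by omega)
        simp only [Nat.add_sub_cancel] at hlo hhi
        have hstep : S n < S (n+1) := by
          have : 0 < C⁻¹ * S (n+1) ^ (-γ) := by positivity
          linarith
        obtain ⟨hmvt1, hmvt2⟩ := mvt_rpow_aux p (S (n+1)) (S n) hp hSn.le hstep
        have hpsub : p - 1 = γ := by rw [hpdef]; ring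
        rw [hpsub] at hmvt1 hmvt2
        have hmul1 : S (n+1) ^ γ * S (n+1) ^ (-γ) = 1 := by
          rw [← Real.rpow_add hSn1]; simp
        constructor
        · -- lower bound
          have hcomp' := hcomp n hn
          -- S n ^ γ ≥ S (n+1) ^ γ / C ^ γ
          have h2 : S (n+1) ^ γ / C ^ γ ≤ S n ^ γ := by
            rw [← Real.div_rpow hSn1.le hC0.le]
            exact Real.rpow_le_rpow (by positivity)
              ((div_le_iff₀ hC0).2 (by linarith)) (by linarith)
          have h3 : C⁻¹ * S (n+1) ^ (-γ) ≤ S (n+1) - S n := hlo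
          have hterm : p * (C ^ γ)⁻¹ * C⁻¹ ≤ p * S n ^ γ * (S (n+1) - S n) := by
            have hA : 0 < S (n+1) ^ (-γ) := Real.rpow_pos_of_pos hSn1 _
            have hB : 0 < S (n+1) ^ γ := Real.rpow_pos_of_pos hSn1 _
            calc p * (C ^ γ)⁻¹ * C⁻¹
                = p * (S (n+1) ^ γ / C ^ γ) * (C⁻¹ * S (n+1) ^ (-γ)) := by
                  rw [show p * (S (n+1) ^ γ / C ^ γ) * (C⁻¹ * S (n+1) ^ (-γ))
                      = p * (C ^ γ)⁻¹ * C⁻¹ * (S (n+1) ^ γ * S (n+1) ^ (-γ)) from by ring,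
                    hmul1, mul_one]
              _ ≤ p * S n ^ γ * (S (n+1) - S n) := by
                  apply mul_le_mul
                  · exact mul_le_mul_of_nonneg_left h2 hp0.le
                  · exact h3
                  · positivity
                  · positivity
          have hconst : C ^ (-p) ≤ p * (C ^ γ)⁻¹ * C⁻¹ := by
            have e : C ^ (-p) = (C ^ γ)⁻¹ * C⁻¹ := by
              rw [Real.rpow_neg hC0.le, ← mul_inv]
              congr 1
              rw [hpdef, add_comm, Real.rpow_add hC0, Real.rpow_one]
            rw [e]
            have hx : 0 < (C ^ γ)⁻¹ * C⁻¹ := by positivity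
            nlinarith
          push_cast
          have expand : ((n:ℝ) + 1) * C ^ (-p) = (n:ℝ) * C ^ (-p) + C ^ (-p) := by ring
          linarith
        · -- upper bound
          have hterm : p * S (n+1) ^ γ * (S (n+1) - S n) ≤ p * C := by
            have hB : 0 < S (n+1) ^ γ := Real.rpow_pos_of_pos hSn1 _
            calc p * S (n+1) ^ γ * (S (n+1) - S n)
                ≤ p * S (n+1) ^ γ * (C * S (n+1) ^ (-γ)) := by
                  apply mul_le_mul_of_nonneg_left hhi (by positivity)
              _ = p * C * (S (n+1) ^ γ * S (n+1) ^ (-γ)) := by ring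
              _ = p * C := by rw [hmul1, mul_one]
          push_cast
          have expand : ((n:ℝ) + 1) * (p * C) = (n:ℝ) * (p * C) + p * C := by ring
          linarith
  -- conclude
  refine ⟨p * C, by positivity, fun k hk => ?_⟩
  obtain ⟨hlo, hhi⟩ := key k hk
  have hSk : 0 < S k := hSpos k hk
  have hk0 : (0:ℝ) < k := by exact_mod_cast hk
  have hq0 : (0:ℝ) < 1 / p := by positivity
  have hSrec : (S k ^ p) ^ (1/p) = S k := by
    rw [← Real.rpow_mul hSk.le, mul_one_div, div_self hp0.ne', Real.rpow_one]
  have hkq : (0:ℝ) ≤ (k:ℝ) ^ (1/p) := Real.rpow_nonneg hk0.le _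
  constructor
  · have h := Real.rpow_le_rpow (by positivity) hlo hq0.le
    rw [hSrec] at h
    have heq : ((k:ℝ) * C ^ (-p)) ^ (1/p) = (k:ℝ) ^ (1/p) * C⁻¹ := by
      rw [Real.mul_rpow hk0.le (by positivity), ← Real.rpow_mul hC0.le]
      have e : -p * (1/p) = -1 := by field_simp
      rw [e, Real.rpow_neg_one]
    rw [heq] at h
    have hinv : (p * C)⁻¹ ≤ C⁻¹ := by
      apply inv_anti₀ hC0
      nlinarith
    calc (p * C)⁻¹ * (k:ℝ) ^ (1/p) ≤ C⁻¹ * (k:ℝ) ^ (1/p) :=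
          mul_le_mul_of_nonneg_right hinv hkq
      _ = (k:ℝ) ^ (1/p) * C⁻¹ := by ring
      _ ≤ S k := h
  · have h := Real.rpow_le_rpow (Real.rpow_nonneg hSk.le _) hhi hq0.le
    rw [hSrec] at h
    have hpC1 : (1:ℝ) ≤ p * C := by nlinarith
    have heq : ((k:ℝ) * (p * C)) ^ (1/p) = (k:ℝ) ^ (1/p) * (p * C) ^ (1/p) :=
      Real.mul_rpow hk0.le (by positivity)
    rw [heq] at h
    have hle : (p * C) ^ (1/p) ≤ p * C := by
      have := Real.rpow_le_rpow_of_exponent_le hpC1 (show 1/p ≤ 1 by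
        rw [div_le_one hp0]; linarith)
      rwa [Real.rpow_one] at this
    calc S k ≤ (k:ℝ) ^ (1/p) * (p * C) ^ (1/p) := h
      _ ≤ (k:ℝ) ^ (1/p) * (p * C) := mul_le_mul_of_nonneg_left hle hkq
      _ = p * C * (k:ℝ) ^ (1/p) := by ring
end

section
/- Let γ > 2 and C ≥ 1. Suppose (S_k)_{k≥0} is a sequence with S_0 = 0, S_1 ≥ 1/C, S_k nondecreasing, S_{k+1} ≤ C S_k for all k ≥ 1, and C⁻¹ S_k^{2/(1-γ)} ≤ S_k - S_{k-1} ≤ C S_k^{2/(1-γ)} for all k ≥ 1. Then there exists C' = C'(γ, C) such that (C')⁻¹ k^{(γ-1)/(1+γ)} ≤ S_k ≤ C' k^{(γ-1)/(1+γ)} for all k ≥ 1. -/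
open Real

/-- Tangent line inequality for `x ↦ x^p`, `p ≥ 1` (Bernoulli). -/
lemma tangent_le_rpow_aux {c d p : ℝ} (hc : 0 < c) (hd : 0 ≤ d) (hp : 1 ≤ p) :
    c ^ p + p * c ^ (p - 1) * (d - c) ≤ d ^ p := by
  have hs : (-1:ℝ) ≤ (d - c) / c := by
    rw [le_div_iff₀ hc]; linarith
  have key := one_add_mul_self_le_rpow_one_add hs hp
  have h1 : (1:ℝ) + (d - c) / c = d / c := by field_simp; ring
  rw [h1, Real.div_rpow hd hc.le] at key
  have hcp : (0:ℝ) < c ^ p := Real.rpow_pos_of_pos hc p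
  have key2 := mul_le_mul_of_nonneg_left key hcp.le
  have hdc : c ^ p * (d ^ p / c ^ p) = d ^ p := by field_simp
  rw [hdc] at key2
  calc c ^ p + p * c ^ (p - 1) * (d - c)
      = c ^ p * (1 + p * ((d - c) / c)) := by
        rw [Real.rpow_sub hc, Real.rpow_one]; field_simp
    _ ≤ d ^ p := key2

theorem discrete_ode_supercritical (γ C : ℝ) (hγ : 2 < γ) (hC : 1 ≤ C)
    (S : ℕ → ℝ) (h0 : S 0 = 0) (h1 : 1 / C ≤ S 1) (hmono : Monotone S)
    (hcomp : ∀ k : ℕ, 1 ≤ k → S (k + 1) ≤ C * S k)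
    (hinc : ∀ k : ℕ, 1 ≤ k →
      C⁻¹ * (S k) ^ (2 / (1 - γ)) ≤ S k - S (k - 1) ∧
      S k - S (k - 1) ≤ C * (S k) ^ (2 / (1 - γ))) :
    ∃ C' > 0, ∀ k : ℕ, 1 ≤ k →
      C'⁻¹ * (k:ℝ) ^ ((γ - 1) / (1 + γ)) ≤ S k ∧
      S k ≤ C' * (k:ℝ) ^ ((γ - 1) / (1 + γ)) := by
  have hC0 : (0:ℝ) < C := by linarith
  have hγ1 : (0:ℝ) < γ - 1 := by linarith
  have hγ1' : (0:ℝ) < 1 + γ := by linarith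
  have h1γ : (1:ℝ) - γ ≠ 0 := by linarith
  set α : ℝ := 2 / (1 - γ) with hαdef
  set p : ℝ := (1 + γ) / (γ - 1) with hpdef
  have hp1 : 1 < p := by
    rw [hpdef, lt_div_iff₀ hγ1]; linarith
  have hp0 : 0 < p := by linarith
  have hpα : p - 1 = -α := by
    rw [hpdef, hαdef]; field_simp; ring
  have hβ : (γ - 1) / (1 + γ) = p⁻¹ := by
    rw [hpdef]; field_simp
  have hS1 : 0 < S 1 := lt_of_lt_of_le (by positivity) h1
  have hSpos : ∀ k : ℕ, 1 ≤ k → 0 < S k := fun k hk =>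
    hS1.trans_le (hmono hk)
  -- step bounds for T k = (S k)^p
  have hstep : ∀ k : ℕ, 1 ≤ k →
      C ^ (-p) ≤ (S (k + 1)) ^ p - (S k) ^ p ∧
      (S (k + 1)) ^ p - (S k) ^ p ≤ p * C := by
    intro k hk
    set a := S k with hadef
    set b := S (k + 1) with hbdef
    have ha : 0 < a := hSpos k hk
    have hab : a ≤ b := hmono (Nat.le_succ k)
    have hb : 0 < b := ha.trans_le hab
    have hba : b ≤ C * a := hcomp k hk
    have hincs := hinc (k + 1) (by omega)
    rw [Nat.add_sub_cancel] at hincs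
    obtain ⟨hlo, hhi⟩ := hincs
    have hbα : (0:ℝ) < b ^ α := Real.rpow_pos_of_pos hb α
    have e1 : b ^ (p - 1) * b ^ α = 1 := by
      rw [hpα, ← Real.rpow_add hb, neg_add_cancel, Real.rpow_zero]
    have e2 : C ^ (p - 1) * C = C ^ p := by
      rw [← Real.rpow_add_one hC0.ne', sub_add_cancel]
    constructor
    · -- lower bound
      have t1 := tangent_le_rpow_aux ha hb.le hp1.le
      have h2 : (b / C) ^ (p - 1) ≤ a ^ (p - 1) := by
        apply Real.rpow_le_rpow (by positivity) _ (by linarith)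
        rw [div_le_iff₀ hC0]; nlinarith
      have e3 : p * ((b / C) ^ (p - 1)) * (C⁻¹ * b ^ α) = p * C ^ (-p) := by
        rw [Real.div_rpow hb.le hC0.le, Real.rpow_neg hC0.le]
        rw [show p * (b ^ (p-1) / C ^ (p-1)) * (C⁻¹ * b ^ α)
            = p * ((b ^ (p-1) * b ^ α) / (C ^ (p-1) * C)) by ring]
        rw [e1, e2]
        field_simp
      calc C ^ (-p) ≤ p * C ^ (-p) := by
            nlinarith [Real.rpow_pos_of_pos hC0 (-p)]
        _ = p * ((b / C) ^ (p - 1)) * (C⁻¹ * b ^ α) := e3.symm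
        _ ≤ p * a ^ (p - 1) * (C⁻¹ * b ^ α) := by
            apply mul_le_mul_of_nonneg_right _ (by positivity)
            exact mul_le_mul_of_nonneg_left h2 hp0.le
        _ ≤ p * a ^ (p - 1) * (b - a) := by
            apply mul_le_mul_of_nonneg_left hlo
            positivity
        _ ≤ b ^ p - a ^ p := by linarith
    · -- upper bound
      have t2 := tangent_le_rpow_aux hb ha.le hp1.le
      calc b ^ p - a ^ p ≤ p * b ^ (p - 1) * (b - a) := by nlinarith
        _ ≤ p * b ^ (p - 1) * (C * b ^ α) := by
            apply mul_le_mul_of_nonneg_left hhi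
            positivity
        _ = p * C * (b ^ (p - 1) * b ^ α) := by ring
        _ = p * C := by rw [e1, mul_one]
  -- T bounds by induction
  have hT : ∀ k : ℕ, 1 ≤ k →
      C ^ (-p) * k ≤ (S k) ^ p ∧ (S k) ^ p ≤ p * C * k := by
    intro k hk
    induction k, hk using Nat.le_induction with
    | base =>
      constructor
      · have hl : (C⁻¹ : ℝ) ^ p ≤ S 1 ^ p := by
          apply Real.rpow_le_rpow (by positivity) _ hp0.le
          rw [← one_div]; exact h1
        rw [Real.inv_rpow hC0.le, ← Real.rpow_neg hC0.le] at hl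
        simpa using hl
      · have hincs := hinc 1 le_rfl
        simp only [Nat.sub_self, h0, sub_zero] at hincs
        have hu : S 1 ≤ C * S 1 ^ α := hincs.2
        have hp' : p = 1 + -α := by linarith
        have hrw : S 1 ^ p = S 1 * S 1 ^ (-α) := by
          rw [hp', Real.rpow_add hS1, Real.rpow_one]
        have hαα : S 1 ^ α * S 1 ^ (-α) = 1 := by
          rw [← Real.rpow_add hS1, add_neg_cancel, Real.rpow_zero]
        have hSα : (0:ℝ) < S 1 ^ (-α) := Real.rpow_pos_of_pos hS1 _
        calc S 1 ^ p = S 1 * S 1 ^ (-α) := hrw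
          _ ≤ (C * S 1 ^ α) * S 1 ^ (-α) := by
              exact mul_le_mul_of_nonneg_right hu hSα.le
          _ = C * (S 1 ^ α * S 1 ^ (-α)) := by ring
          _ = C := by rw [hαα, mul_one]
          _ ≤ p * C * ((1:ℕ):ℝ) := by push_cast; nlinarith
    | succ n hn ih =>
      obtain ⟨il, iu⟩ := ih
      obtain ⟨sl, su⟩ := hstep n hn
      have hCp : (0:ℝ) < C ^ (-p) := Real.rpow_pos_of_pos hC0 _
      constructor
      · push_cast
        push_cast at il
        nlinarith
      · push_cast
        push_cast at iu
        nlinarith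
  -- conclude
  refine ⟨max C ((p * C) ^ p⁻¹), lt_of_lt_of_le hC0 (le_max_left _ _), ?_⟩
  intro k hk
  obtain ⟨hTl, hTu⟩ := hT k hk
  have hSk : 0 < S k := hSpos k hk
  have hk0 : (0:ℝ) < (k:ℝ) := by exact_mod_cast Nat.lt_of_lt_of_le Nat.zero_lt_one hk
  have hSid : (S k ^ p) ^ p⁻¹ = S k := by
    rw [← Real.rpow_mul hSk.le, mul_inv_cancel₀ hp0.ne', Real.rpow_one]
  rw [hβ]
  constructor
  · have l1 : (C ^ (-p) * k) ^ p⁻¹ ≤ (S k ^ p) ^ p⁻¹ :=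
      Real.rpow_le_rpow (by positivity) hTl (by positivity)
    have l3 : (C ^ (-p) * (k:ℝ)) ^ p⁻¹ = C⁻¹ * (k:ℝ) ^ p⁻¹ := by
      rw [Real.mul_rpow (by positivity) (by positivity),
        ← Real.rpow_mul hC0.le, neg_mul, mul_inv_cancel₀ hp0.ne',
        Real.rpow_neg_one]
    have l4 : (max C ((p * C) ^ p⁻¹))⁻¹ ≤ C⁻¹ := by
      apply inv_anti₀ hC0 (le_max_left _ _)
    calc (max C ((p * C) ^ p⁻¹))⁻¹ * (k:ℝ) ^ p⁻¹
        ≤ C⁻¹ * (k:ℝ) ^ p⁻¹ := by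
          apply mul_le_mul_of_nonneg_right l4 (by positivity)
      _ = (C ^ (-p) * (k:ℝ)) ^ p⁻¹ := l3.symm
      _ ≤ (S k ^ p) ^ p⁻¹ := l1
      _ = S k := hSid
  · have u1 : (S k ^ p) ^ p⁻¹ ≤ (p * C * k) ^ p⁻¹ :=
      Real.rpow_le_rpow (by positivity) hTu (by positivity)
    have u3 : (p * C * (k:ℝ)) ^ p⁻¹ = (p * C) ^ p⁻¹ * (k:ℝ) ^ p⁻¹ :=
      Real.mul_rpow (by positivity) (by positivity)
    calc S k = (S k ^ p) ^ p⁻¹ := hSid.symm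
      _ ≤ (p * C * (k:ℝ)) ^ p⁻¹ := u1
      _ = (p * C) ^ p⁻¹ * (k:ℝ) ^ p⁻¹ := u3
      _ ≤ max C ((p * C) ^ p⁻¹) * (k:ℝ) ^ p⁻¹ := by
          apply mul_le_mul_of_nonneg_right (le_max_right _ _) (by positivity)
end

section
/- Let C ≥ 1. Suppose (S_k)_{k≥0} is a sequence with S_0 = 0, S_1 ≥ 2, S_k nondecreasing, S_{k+1} ≤ C S_k for all k ≥ 1, and C⁻¹ S_k^{-2} ln(S_k) ≤ S_k - S_{k-1} ≤ C S_k^{-2} ln(S_k) for all k ≥ 2. Then there exists C' = C'(C) such that for all k ≥ 2: (C')⁻¹ (k ln k)^{1/3} ≤ S_k ≤ C' (k ln k)^{1/3}. -/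
open Real

set_option maxHeartbeats 1000000

lemma dc_step (C : ℝ) (hC : 1 ≤ C) (S : ℕ → ℝ) (h1 : 2 ≤ S 1) (hmono : Monotone S)
    (hinc : ∀ k : ℕ, 2 ≤ k →
      C⁻¹ * (S k) ^ (-(2:ℝ)) * Real.log (S k) ≤ S k - S (k - 1) ∧
      S k - S (k - 1) ≤ C * (S k) ^ (-(2:ℝ)) * Real.log (S k)) :
    ∀ j : ℕ, 1 ≤ j →
      S j ^ 3 + C⁻¹ * Real.log (S (j+1)) ≤ S (j+1) ^ 3 ∧
      S (j+1) ^ 3 ≤ S j ^ 3 + 3 * C * Real.log (S (j+1)) := by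
  intro j hj
  have ha : 2 ≤ S j := h1.trans (hmono hj)
  have hab : S j ≤ S (j+1) := hmono (Nat.le_succ j)
  have hb : 2 ≤ S (j+1) := le_trans ha hab
  have hb0 : (0:ℝ) < S (j+1) := by linarith
  obtain ⟨hlo, hhi⟩ := hinc (j+1) (by omega)
  simp only [Nat.add_sub_cancel] at hlo hhi
  have hrp : (S (j+1)) ^ (-(2:ℝ)) = ((S (j+1))^2)⁻¹ := by
    rw [Real.rpow_neg hb0.le, show ((2:ℝ)) = ((2:ℕ):ℝ) by norm_num, Real.rpow_natCast]
  rw [hrp] at hlo hhi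
  have hL : (0:ℝ) ≤ Real.log (S (j+1)) := Real.log_nonneg (by linarith)
  have hsq : (0:ℝ) < (S (j+1))^2 := by positivity
  have hcan : ((S (j+1))^2)⁻¹ * (S (j+1))^2 = 1 := inv_mul_cancel₀ (ne_of_gt hsq)
  have hlo' : C⁻¹ * Real.log (S (j+1)) ≤ (S (j+1) - S j) * (S (j+1))^2 := by
    have := mul_le_mul_of_nonneg_right hlo hsq.le
    calc C⁻¹ * Real.log (S (j+1)) = C⁻¹ * ((S (j+1))^2)⁻¹ * Real.log (S (j+1)) * (S (j+1))^2 := by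
          rw [show C⁻¹ * ((S (j+1))^2)⁻¹ * Real.log (S (j+1)) * (S (j+1))^2
              = C⁻¹ * Real.log (S (j+1)) * (((S (j+1))^2)⁻¹ * (S (j+1))^2) by ring, hcan, mul_one]
      _ ≤ _ := this
  have hhi' : (S (j+1) - S j) * (S (j+1))^2 ≤ C * Real.log (S (j+1)) := by
    have := mul_le_mul_of_nonneg_right hhi hsq.le
    calc (S (j+1) - S j) * (S (j+1))^2 ≤ C * ((S (j+1))^2)⁻¹ * Real.log (S (j+1)) * (S (j+1))^2 := this
      _ = C * Real.log (S (j+1)) := by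
          rw [show C * ((S (j+1))^2)⁻¹ * Real.log (S (j+1)) * (S (j+1))^2
              = C * Real.log (S (j+1)) * (((S (j+1))^2)⁻¹ * (S (j+1))^2) by ring, hcan, mul_one]
  constructor
  · nlinarith [mul_nonneg (sub_nonneg.2 hab) (by positivity : (0:ℝ) ≤ S j * S (j+1) + S j ^ 2)]
  · nlinarith [mul_nonneg (mul_nonneg (sub_nonneg.2 hab) (sub_nonneg.2 hab))
      (by linarith : (0:ℝ) ≤ 2 * S (j+1) + S j)]

lemma dc_crude_lower (C : ℝ) (hC : 1 ≤ C) (S : ℕ → ℝ) (h1 : 2 ≤ S 1) (hmono : Monotone S)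
    (hstep : ∀ j : ℕ, 1 ≤ j → S j ^ 3 + C⁻¹ * Real.log (S (j+1)) ≤ S (j+1) ^ 3) :
    ∀ k : ℕ, 1 ≤ k → 8 + C⁻¹ * Real.log 2 * ((k:ℝ) - 1) ≤ S k ^ 3 := by
  intro k hk
  induction k, hk using Nat.le_induction with
  | base => norm_num; nlinarith [h1, sq_nonneg (S 1)]
  | succ k hk ih =>
    have hb : 2 ≤ S (k+1) := h1.trans (hmono (by omega))
    have hlog : Real.log 2 ≤ Real.log (S (k+1)) := Real.log_le_log (by norm_num) hb
    have hCpos : (0:ℝ) < C⁻¹ := by positivity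
    have h2 := hstep k hk
    have h3 := mul_le_mul_of_nonneg_left hlog hCpos.le
    push_cast
    linarith
lemma dc_crude_upper (C : ℝ) (hC : 1 ≤ C) (S : ℕ → ℝ) (h1 : 2 ≤ S 1) (hmono : Monotone S)
    (hstep : ∀ j : ℕ, 1 ≤ j → S (j+1) ^ 3 ≤ S j ^ 3 + 3 * C * Real.log (S (j+1))) :
    ∀ k : ℕ, 1 ≤ k → S k ^ 3 ≤ S 1 ^ 3 + 3 * C * ((k:ℝ) - 1) * Real.log (S k) := by
  intro k hk
  induction k, hk using Nat.le_induction with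
  | base => norm_num
  | succ k hk ih =>
    have ha : 2 ≤ S k := h1.trans (hmono hk)
    have hlog : Real.log (S k) ≤ Real.log (S (k+1)) :=
      Real.log_le_log (by linarith) (hmono (Nat.le_succ k))
    have hk1 : (0:ℝ) ≤ 3 * C * ((k:ℝ) - 1) := by
      have hkk : (1:ℝ) ≤ (k:ℝ) := by exact_mod_cast hk
      nlinarith
    have h2 := hstep k hk
    have h3 := mul_le_mul_of_nonneg_left hlog hk1
    push_cast
    nlinarith
lemma dc_add_lower (C : ℝ) (hC : 1 ≤ C) (S : ℕ → ℝ) (h1 : 2 ≤ S 1) (hmono : Monotone S)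
    (hstep : ∀ j : ℕ, 1 ≤ j → S j ^ 3 + C⁻¹ * Real.log (S (j+1)) ≤ S (j+1) ^ 3) :
    ∀ k : ℕ, 1 ≤ k → ∀ m : ℕ, S k ^ 3 + C⁻¹ * (m:ℝ) * Real.log (S k) ≤ S (k+m) ^ 3 := by
  intro k hk m
  induction m with
  | zero => simp
  | succ m ih =>
    have ha : 2 ≤ S k := h1.trans (hmono hk)
    have hlog : Real.log (S k) ≤ Real.log (S (k+m+1)) :=
      Real.log_le_log (by linarith) (hmono (by omega))
    have hCpos : (0:ℝ) < C⁻¹ := by positivity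
    have h2 := hstep (k+m) (by omega)
    have h3 := mul_le_mul_of_nonneg_left hlog hCpos.le
    have : S (k + (m+1)) = S (k + m + 1) := by ring_nf
    rw [this]
    push_cast
    linarith

private lemma dc_main (C : ℝ) (hC : 1 ≤ C)
    (S : ℕ → ℝ) (h0 : S 0 = 0) (h1 : 2 ≤ S 1) (hmono : Monotone S)
    (hcomp : ∀ k : ℕ, 1 ≤ k → S (k + 1) ≤ C * S k)
    (hinc : ∀ k : ℕ, 2 ≤ k →
      C⁻¹ * (S k) ^ (-(2:ℝ)) * Real.log (S k) ≤ S k - S (k - 1) ∧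
      S k - S (k - 1) ≤ C * (S k) ^ (-(2:ℝ)) * Real.log (S k))
    (hstepL : ∀ j : ℕ, 1 ≤ j → S j ^ 3 + C⁻¹ * Real.log (S (j+1)) ≤ S (j+1) ^ 3)
    (hcl : ∀ k : ℕ, 1 ≤ k → 8 + C⁻¹ * Real.log 2 * ((k:ℝ) - 1) ≤ S k ^ 3)
    (hcu : ∀ k : ℕ, 1 ≤ k → S k ^ 3 ≤ S 1 ^ 3 + 3 * C * ((k:ℝ) - 1) * Real.log (S k))
    (dbl : ∀ k : ℕ, 1 ≤ k → ∀ m : ℕ, S k ^ 3 + C⁻¹ * (m:ℝ) * Real.log (S k) ≤ S (k+m) ^ 3) :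
    ∃ C' > 0, ∀ k : ℕ, 2 ≤ k →
      C'⁻¹ * ((k:ℝ) * Real.log k) ^ ((1:ℝ) / 3) ≤ S k ∧
      S k ≤ C' * ((k:ℝ) * Real.log k) ^ ((1:ℝ) / 3) := by
  have hCpos : (0:ℝ) < C := by linarith
  have hCi : (0:ℝ) < C⁻¹ := by positivity
  have hlog2 : (0:ℝ) < Real.log 2 := Real.log_pos (by norm_num)
  have hS2 : ∀ k : ℕ, 1 ≤ k → 2 ≤ S k := fun k hk => h1.trans (hmono hk)
  have hS10 : (0:ℝ) < S 1 := by linarith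
  -- crude linear lower bound
  obtain ⟨c₁, hc₁⟩ : ∃ c : ℝ, c = C⁻¹ * Real.log 2 / 2 := ⟨_, rfl⟩
  have hc₁pos : 0 < c₁ := by rw [hc₁]; positivity
  have lower_lin : ∀ k : ℕ, 2 ≤ k → c₁ * (k:ℝ) ≤ S k ^ 3 := by
    intro k hk
    have h := hcl k (by omega)
    have hk2 : (2:ℝ) ≤ (k:ℝ) := by exact_mod_cast hk
    have e : C⁻¹ * Real.log 2 * ((k:ℝ)/2) ≤ C⁻¹ * Real.log 2 * ((k:ℝ)-1) :=
      mul_le_mul_of_nonneg_left (by linarith) (by positivity)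
    rw [hc₁]; nlinarith
  -- quadratic upper bound: S k ^ 2 ≤ A k
  obtain ⟨A, hA⟩ : ∃ a : ℝ, a = S 1 ^ 3 / 2 + 3 * C := ⟨_, rfl⟩
  have hA1 : 1 ≤ A := by rw [hA]; nlinarith [pow_pos hS10 3]
  have sq_upper : ∀ k : ℕ, 1 ≤ k → S k ^ 2 ≤ A * (k:ℝ) := by
    intro k hk
    have h := hcu k hk
    have ha := hS2 k hk
    have hpos : (0:ℝ) < S k := by linarith
    have hlogle : Real.log (S k) ≤ S k := Real.log_le_self hpos.le
    have hk1 : (1:ℝ) ≤ (k:ℝ) := by exact_mod_cast hk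
    have e1 : ((k:ℝ)-1) * Real.log (S k) ≤ (k:ℝ) * S k :=
      mul_le_mul (by linarith) hlogle (Real.log_nonneg (by linarith)) (by positivity)
    have e1' := mul_le_mul_of_nonneg_left e1 (by positivity : (0:ℝ) ≤ 3*C)
    have hks : (2:ℝ) ≤ (k:ℝ) * S k := by nlinarith
    have hS13 : (0:ℝ) < S 1 ^ 3 := by positivity
    have e2 : S 1 ^ 3 ≤ S 1 ^ 3 / 2 * ((k:ℝ) * S k) := by nlinarith
    have key : S k ^ 2 * S k ≤ A * (k:ℝ) * S k := by rw [hA]; nlinarith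
    exact le_of_mul_le_mul_right key hpos
  -- logarithmic upper bound
  obtain ⟨D, hD⟩ : ∃ d : ℝ, d = (1 + Real.log A / Real.log 2) / 2 := ⟨_, rfl⟩
  have hlogA : 0 ≤ Real.log A := Real.log_nonneg hA1
  have hDpos : 0 < D := by
    rw [hD]
    have := div_nonneg hlogA hlog2.le
    linarith
  have log_upper : ∀ k : ℕ, 2 ≤ k → Real.log (S k) ≤ D * Real.log k := by
    intro k hk
    have ha := hS2 k (by omega)
    have hpos : (0:ℝ) < S k := by linarith
    have hk2 : (2:ℝ) ≤ (k:ℝ) := by exact_mod_cast hk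
    have hlogk : Real.log 2 ≤ Real.log k := Real.log_le_log (by norm_num) hk2
    have h2 : Real.log (S k ^ 2) ≤ Real.log (A * k) :=
      Real.log_le_log (by positivity) (sq_upper k (by omega))
    rw [Real.log_pow, Real.log_mul (by linarith : A ≠ 0) (by positivity : ((k:ℝ)) ≠ 0)] at h2
    push_cast at h2
    have h3 : Real.log A ≤ (Real.log A / Real.log 2) * Real.log k := by
      rw [div_mul_eq_mul_div, le_div_iff₀ hlog2]
      exact mul_le_mul_of_nonneg_left hlogk hlogA
    rw [hD]
    linarith
  -- final upper bound
  obtain ⟨c₃, hc₃⟩ : ∃ c : ℝ, c = S 1 ^ 3 / (2 * Real.log 2) + 3 * C * D := ⟨_, rfl⟩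
  have hc₃pos : 0 < c₃ := by rw [hc₃]; positivity
  have upper_final : ∀ k : ℕ, 2 ≤ k → S k ^ 3 ≤ c₃ * ((k:ℝ) * Real.log k) := by
    intro k hk
    have h := hcu k (by omega)
    have ha := hS2 k (by omega)
    have hk2 : (2:ℝ) ≤ (k:ℝ) := by exact_mod_cast hk
    have hlogk : Real.log 2 ≤ Real.log k := Real.log_le_log (by norm_num) hk2
    have hlogk0 : 0 ≤ Real.log k := hlog2.le.trans hlogk
    have e1 : ((k:ℝ)-1) * Real.log (S k) ≤ (k:ℝ) * (D * Real.log k) :=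
      mul_le_mul (by linarith) (log_upper k hk) (Real.log_nonneg (by linarith)) (by positivity)
    have e1' := mul_le_mul_of_nonneg_left e1 (by positivity : (0:ℝ) ≤ 3*C)
    have e2 : (2:ℝ) * Real.log 2 ≤ (k:ℝ) * Real.log k := mul_le_mul hk2 hlogk hlog2.le (by positivity)
    have hS13 : (0:ℝ) < S 1 ^ 3 := by positivity
    have e3 : S 1 ^ 3 ≤ S 1 ^ 3 / (2 * Real.log 2) * ((k:ℝ) * Real.log k) := by
      rw [div_mul_eq_mul_div, le_div_iff₀ (by positivity)]
      nlinarith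
    rw [hc₃]
    linarith
  -- log lower bound via c₁
  have log_lower3 : ∀ k : ℕ, 2 ≤ k → Real.log c₁ + Real.log k ≤ 3 * Real.log (S k) := by
    intro k hk
    have hkpos : (0:ℝ) < (k:ℝ) := by positivity
    have h2 : Real.log (c₁ * k) ≤ Real.log (S k ^ 3) :=
      Real.log_le_log (by positivity) (lower_lin k hk)
    rw [Real.log_mul (ne_of_gt hc₁pos) (ne_of_gt hkpos), Real.log_pow] at h2
    push_cast at h2
    linarith
  obtain ⟨K, hK⟩ : ∃ x : ℝ, x = Real.exp (2 * |Real.log c₁| + 1) := ⟨_, rfl⟩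
  have log_half : ∀ k : ℕ, 2 ≤ k → K ≤ (k:ℝ) → Real.log k / 6 ≤ Real.log (S k) := by
    intro k hk hKk
    have h2 := log_lower3 k hk
    have h3 : 2 * |Real.log c₁| + 1 ≤ Real.log k := by
      have := Real.log_le_log (Real.exp_pos _) (hK ▸ hKk)
      rwa [Real.log_exp] at this
    have habs : -|Real.log c₁| ≤ Real.log c₁ := neg_abs_le _
    linarith [abs_nonneg (Real.log c₁)]
  -- choose N
  obtain ⟨N, hN9, hNK⟩ : ∃ N : ℕ, 9 ≤ N ∧ 3 * K ≤ (N:ℝ) := by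
    refine ⟨max 9 ⌈3*K⌉₊, le_max_left _ _, ?_⟩
    calc 3*K ≤ (⌈3*K⌉₊ : ℝ) := Nat.le_ceil _
      _ ≤ ((max 9 ⌈3*K⌉₊ : ℕ) : ℝ) := by exact_mod_cast le_max_right 9 ⌈3*K⌉₊
  have lower_big : ∀ n : ℕ, N ≤ n → C⁻¹/36 * ((n:ℝ) * Real.log n) ≤ S n ^ 3 := by
    intro n hn
    have h9 : 9 ≤ n := le_trans hN9 hn
    have hnN : (N:ℝ) ≤ (n:ℝ) := by exact_mod_cast hn
    have h9R : (9:ℝ) ≤ (n:ℝ) := by exact_mod_cast h9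
    have hk3 : n ≤ 3*(n/2) := by omega
    have hkge : 2 ≤ n/2 := by omega
    have hkR : (n:ℝ)/3 ≤ ((n/2 : ℕ):ℝ) := by
      have : (n:ℝ) ≤ 3 * ((n/2:ℕ):ℝ) := by exact_mod_cast hk3
      linarith
    have hKk : K ≤ ((n/2:ℕ):ℝ) := by linarith
    have hlogS := log_half (n/2) hkge hKk
    have hsq : Real.sqrt n ≤ (n:ℝ)/3 := by
      have h := Real.sqrt_le_sqrt (show (n:ℝ) ≤ ((n:ℝ)/3)^2 by nlinarith)
      rwa [Real.sqrt_sq (by linarith)] at h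
    have hlogk : Real.log n / 2 ≤ Real.log ((n/2:ℕ):ℝ) := by
      have h := Real.log_le_log (Real.sqrt_pos.2 (by linarith)) (le_trans hsq hkR)
      rwa [Real.log_sqrt (by linarith)] at h
    have hmono' : S (n/2 + n/2) ≤ S n := hmono (by omega)
    have hd := dbl (n/2) (by omega) (n/2)
    have hSk2 : 2 ≤ S (n/2) := hS2 _ (by omega)
    have hSkpos : (0:ℝ) < S (n/2) := by linarith
    have hcube : S (n/2 + n/2)^3 ≤ S n ^ 3 :=
      pow_le_pow_left₀ (by linarith [hS2 (n/2+n/2) (by omega : 1 ≤ n/2+n/2)]) hmono' 3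
    have hSk3 : (0:ℝ) ≤ S (n/2)^3 := by positivity
    have hlogn0 : (0:ℝ) ≤ Real.log n := Real.log_nonneg (by linarith)
    have e : (n:ℝ)/3 * (Real.log n / 12) ≤ ((n/2:ℕ):ℝ) * Real.log (S (n/2)) := by
      apply mul_le_mul hkR (by linarith) (by positivity) (by positivity)
    calc C⁻¹/36 * ((n:ℝ) * Real.log n) = C⁻¹ * ((n:ℝ)/3 * (Real.log n / 12)) := by ring
      _ ≤ C⁻¹ * (((n/2:ℕ):ℝ) * Real.log (S (n/2))) := mul_le_mul_of_nonneg_left e hCi.le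
      _ ≤ S (n/2)^3 + C⁻¹ * ((n/2:ℕ):ℝ) * Real.log (S (n/2)) := by linarith [hSk3]
      _ ≤ S (n/2 + n/2)^3 := hd
      _ ≤ S n ^ 3 := hcube
  -- combine with small n
  have hN0 : (9:ℝ) ≤ (N:ℝ) := by exact_mod_cast hN9
  have hNlogpos : 0 < (N:ℝ) * Real.log N := by
    apply mul_pos (by linarith)
    exact Real.log_pos (by linarith)
  obtain ⟨c₂, hc₂⟩ : ∃ c : ℝ, c = min (C⁻¹/36) (8/((N:ℝ) * Real.log N)) := ⟨_, rfl⟩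
  have hc₂pos : 0 < c₂ := by
    rw [hc₂]
    exact lt_min (by positivity) (by positivity)
  have lower_final : ∀ k : ℕ, 2 ≤ k → c₂ * ((k:ℝ) * Real.log k) ≤ S k ^ 3 := by
    intro k hk
    have hk2 : (2:ℝ) ≤ (k:ℝ) := by exact_mod_cast hk
    have hlogk0 : 0 ≤ Real.log k := Real.log_nonneg (by linarith)
    have hx0 : (0:ℝ) ≤ (k:ℝ) * Real.log k := by positivity
    rcases le_or_gt N k with h | h
    · refine le_trans ?_ (lower_big k h)
      exact mul_le_mul_of_nonneg_right (by rw [hc₂]; exact min_le_left _ _) hx0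
    · have hx2 : 2 ≤ S k := hS2 k (by omega)
      have h8 : (8:ℝ) ≤ S k ^ 3 := by
        nlinarith [mul_nonneg (by linarith : (0:ℝ) ≤ S k - 2)
          (by nlinarith [sq_nonneg (S k)] : (0:ℝ) ≤ S k^2 + 2*S k + 4)]
      have hkN : (k:ℝ) * Real.log k ≤ (N:ℝ) * Real.log N := by
        have hkNle : (k:ℝ) ≤ (N:ℝ) := by exact_mod_cast h.le
        exact mul_le_mul hkNle (Real.log_le_log (by linarith) hkNle) hlogk0 (by linarith)
      calc c₂ * ((k:ℝ) * Real.log k) ≤ 8/((N:ℝ) * Real.log N) * ((N:ℝ) * Real.log N) := by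
            apply mul_le_mul (by rw [hc₂]; exact min_le_right _ _) hkN hx0 (by positivity)
        _ = 8 := div_mul_cancel₀ _ (ne_of_gt hNlogpos)
        _ ≤ S k ^ 3 := h8
  -- conversion to cube roots
  obtain ⟨C', hC'⟩ : ∃ c : ℝ, c = max (c₃ ^ ((1:ℝ)/3)) ((c₂ ^ ((1:ℝ)/3))⁻¹) := ⟨_, rfl⟩
  have h3pos : 0 < c₃ ^ ((1:ℝ)/3) := Real.rpow_pos_of_pos hc₃pos _
  have h2pos : 0 < c₂ ^ ((1:ℝ)/3) := Real.rpow_pos_of_pos hc₂pos _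
  have hC'pos : 0 < C' := by rw [hC']; exact lt_of_lt_of_le h3pos (le_max_left _ _)
  refine ⟨C', hC'pos, fun k hk => ?_⟩
  have hk2 : (2:ℝ) ≤ (k:ℝ) := by exact_mod_cast hk
  have hlogk : 0 < Real.log k := Real.log_pos (by linarith)
  have hx : 0 < (k:ℝ) * Real.log k := mul_pos (by linarith) hlogk
  have hSpos : (0:ℝ) < S k := by linarith [hS2 k (by omega)]
  have hcube_eq : (S k ^ 3) ^ ((1:ℝ)/3) = S k := by
    rw [show (1:ℝ)/3 = (((3:ℕ):ℝ))⁻¹ by norm_num]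
    exact Real.pow_rpow_inv_natCast hSpos.le (by norm_num)
  constructor
  · have e1 : (c₂ * ((k:ℝ) * Real.log k)) ^ ((1:ℝ)/3) ≤ (S k ^ 3) ^ ((1:ℝ)/3) :=
      Real.rpow_le_rpow (by positivity) (lower_final k hk) (by norm_num)
    rw [Real.mul_rpow hc₂pos.le hx.le, hcube_eq] at e1
    have e2 : C'⁻¹ ≤ c₂ ^ ((1:ℝ)/3) := by
      have h := inv_anti₀ (by positivity : (0:ℝ) < (c₂ ^ ((1:ℝ)/3))⁻¹)
        (hC' ▸ le_max_right (c₃ ^ ((1:ℝ)/3)) ((c₂ ^ ((1:ℝ)/3))⁻¹))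
      rwa [inv_inv] at h
    calc C'⁻¹ * ((k:ℝ) * Real.log k) ^ ((1:ℝ)/3)
        ≤ c₂ ^ ((1:ℝ)/3) * ((k:ℝ) * Real.log k) ^ ((1:ℝ)/3) :=
          mul_le_mul_of_nonneg_right e2 (Real.rpow_nonneg hx.le _)
      _ ≤ S k := e1
  · have e1 : (S k ^ 3) ^ ((1:ℝ)/3) ≤ (c₃ * ((k:ℝ) * Real.log k)) ^ ((1:ℝ)/3) :=
      Real.rpow_le_rpow (by positivity) (upper_final k hk) (by norm_num)
    rw [Real.mul_rpow hc₃pos.le hx.le, hcube_eq] at e1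
    calc S k ≤ c₃ ^ ((1:ℝ)/3) * ((k:ℝ) * Real.log k) ^ ((1:ℝ)/3) := e1
      _ ≤ C' * ((k:ℝ) * Real.log k) ^ ((1:ℝ)/3) := by
          apply mul_le_mul_of_nonneg_right _ (Real.rpow_nonneg hx.le _)
          rw [hC']; exact le_max_left _ _

theorem discrete_ode_critical (C : ℝ) (hC : 1 ≤ C)
    (S : ℕ → ℝ) (h0 : S 0 = 0) (h1 : 2 ≤ S 1) (hmono : Monotone S)
    (hcomp : ∀ k : ℕ, 1 ≤ k → S (k + 1) ≤ C * S k)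
    (hinc : ∀ k : ℕ, 2 ≤ k →
      C⁻¹ * (S k) ^ (-(2:ℝ)) * Real.log (S k) ≤ S k - S (k - 1) ∧
      S k - S (k - 1) ≤ C * (S k) ^ (-(2:ℝ)) * Real.log (S k)) :
    ∃ C' > 0, ∀ k : ℕ, 2 ≤ k →
      C'⁻¹ * ((k:ℝ) * Real.log k) ^ ((1:ℝ) / 3) ≤ S k ∧
      S k ≤ C' * ((k:ℝ) * Real.log k) ^ ((1:ℝ) / 3) := by
  have hstepL : ∀ j : ℕ, 1 ≤ j → S j ^ 3 + C⁻¹ * Real.log (S (j+1)) ≤ S (j+1) ^ 3 :=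
    fun j hj => (dc_step C hC S h1 hmono hinc j hj).1
  have hstepU : ∀ j : ℕ, 1 ≤ j → S (j+1) ^ 3 ≤ S j ^ 3 + 3 * C * Real.log (S (j+1)) :=
    fun j hj => (dc_step C hC S h1 hmono hinc j hj).2
  exact dc_main C hC S h0 h1 hmono hcomp hinc hstepL
    (dc_crude_lower C hC S h1 hmono hstepL)
    (dc_crude_upper C hC S h1 hmono hstepU)
    (dc_add_lower C hC S h1 hmono hstepL)
end
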